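/- (Characteristic formulae for worlds) Let P be a finite set of atomic propositions. For every world-pointed inquisitive modal model M,w over P and every n ∈ ℕ there exists an InqML formula χ^n_{M,w} of modal depth at most n such that for every world-pointed inquisitive modal model M',w' over P: M',w' ⊨ χ^n_{M,w} if and only if M',w' ~^n M,w. -/

import Mathlib

/-- Formulas of inquisitive modal logic InqML over atomic propositions `P`. -/
inductive InqForm (P : Type) : Type
  | atom : P → InqForm P
  | bot : InqForm P
  | and : InqForm P → InqForm P → InqForm P
  | impl : InqForm P → InqForm P → InqForm P
  | idisj : InqForm P → InqForm P → InqForm P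
  | box : InqForm P → InqForm P
  | boxplus : InqForm P → InqForm P

/-- An inquisitive modal model `M = ⟨W, Σ, V⟩`. -/
structure InqModel (P : Type) where
  W : Type
  Sig : W → Set (Set W)
  Sig_nonempty : ∀ w, (Sig w).Nonempty
  Sig_downward : ∀ w, ∀ s ∈ Sig w, ∀ t ⊆ s, t ∈ Sig w
  V : P → Set W

/-- `σ(w) = ⋃ Σ(w)`. -/
def InqModel.sigma {P : Type} (M : InqModel P) (w : M.W) : Set M.W :=
  ⋃₀ M.Sig w

/-- Support of a formula at an information state `s ⊆ W`. -/
def support {P : Type} (M : InqModel P) : InqForm P → Set M.W → Prop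
  | .atom p, s => s ⊆ M.V p
  | .bot, s => s = ∅
  | .and φ ψ, s => support M φ s ∧ support M ψ s
  | .impl φ ψ, s => ∀ t ⊆ s, support M φ t → support M ψ t
  | .idisj φ ψ, s => support M φ s ∨ support M ψ s
  | .box φ, s => ∀ w ∈ s, support M φ (M.sigma w)
  | .boxplus φ, s => ∀ w ∈ s, ∀ t ∈ M.Sig w, support M φ t

/-- Truth at a world: `M,w ⊨ φ` iff `M,{w} ⊨ φ`. -/
def truth {P : Type} (M : InqModel P) (w : M.W) (φ : InqForm P) : Prop :=
  support M φ {w}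

/-- Modal depth: maximal nesting depth of `□` and `⊞`. -/
def mdepth {P : Type} : InqForm P → ℕ
  | .atom _ => 0
  | .bot => 0
  | .and φ ψ => max (mdepth φ) (mdepth ψ)
  | .impl φ ψ => max (mdepth φ) (mdepth ψ)
  | .idisj φ ψ => max (mdepth φ) (mdepth ψ)
  | .box φ => mdepth φ + 1
  | .boxplus φ => mdepth φ + 1

/-- Lift of a relation between worlds to sets of worlds: every world on either
side is related to some world on the other side. -/
def StateRel {W W' : Type} (Z : W → W' → Prop) (s : Set W) (s' : Set W') : Prop :=
  (∀ w ∈ s, ∃ w' ∈ s', Z w w') ∧ (∀ w' ∈ s', ∃ w ∈ s, Z w w')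

/-- `n`-bisimilarity between worlds of two inquisitive modal models. -/
def NBisimW {P : Type} (M M' : InqModel P) : ℕ → M.W → M'.W → Prop
  | 0, w, w' => ∀ p : P, w ∈ M.V p ↔ w' ∈ M'.V p
  | n + 1, w, w' => (∀ p : P, w ∈ M.V p ↔ w' ∈ M'.V p) ∧
      (∀ s ∈ M.Sig w, ∃ s' ∈ M'.Sig w', StateRel (NBisimW M M' n) s s') ∧
      (∀ s' ∈ M'.Sig w', ∃ s ∈ M.Sig w, StateRel (NBisimW M M' n) s s')

/-- `n`-bisimilarity between information states. -/
def NBisimS {P : Type} (M M' : InqModel P) (n : ℕ) (s : Set M.W) (s' : Set M'.W) : Prop :=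
  StateRel (NBisimW M M' n) s s'

/-- `Z` is a bisimulation between two inquisitive modal models. -/
def IsBisimulation {P : Type} (M M' : InqModel P) (Z : M.W → M'.W → Prop) : Prop :=
  ∀ w w', Z w w' →
    (∀ p : P, w ∈ M.V p ↔ w' ∈ M'.V p) ∧
    (∀ s ∈ M.Sig w, ∃ s' ∈ M'.Sig w', StateRel Z s s') ∧
    (∀ s' ∈ M'.Sig w', ∃ s ∈ M.Sig w, StateRel Z s s')

/-- Bisimilarity of worlds: inclusion in some bisimulation. -/
def BisimW {P : Type} (M M' : InqModel P) (w : M.W) (w' : M'.W) : Prop :=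
  ∃ Z, IsBisimulation M M' Z ∧ Z w w'

/-- Bisimilarity of information states. -/
def BisimS {P : Type} (M M' : InqModel P) (s : Set M.W) (s' : Set M'.W) : Prop :=
  StateRel (BisimW M M') s s'


section Aux

open Classical

noncomputable section

namespace CharAux

variable {P : Type}

def fneg (φ : InqForm P) : InqForm P := φ.impl .bot
def ftop : InqForm P := fneg .bot
def fdneg (φ : InqForm P) : InqForm P := fneg (fneg φ)

def bigConj : List (InqForm P) → InqForm P
  | [] => ftop
  | φ :: l => φ.and (bigConj l)

def bigIdisj : List (InqForm P) → InqForm P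
  | [] => .bot
  | φ :: l => φ.idisj (bigIdisj l)

lemma support_ftop (M : InqModel P) (s : Set M.W) : support M ftop s := by
  intro t _ h; exact h

lemma support_bigConj (M : InqModel P) (l : List (InqForm P)) (s : Set M.W) :
    support M (bigConj l) s ↔ ∀ φ ∈ l, support M φ s := by
  induction l with
  | nil => simp [bigConj, support_ftop]
  | cons φ l ih => simp [bigConj, support, ih]

lemma support_bigIdisj (M : InqModel P) (l : List (InqForm P)) (s : Set M.W) :
    support M (bigIdisj l) s ↔ s = ∅ ∨ ∃ φ ∈ l, support M φ s := by
  induction l with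
  | nil => simp [bigIdisj, support]
  | cons φ l ih => simp [bigIdisj, support, ih]; tauto

lemma truth_fneg (M : InqModel P) (w : M.W) (φ : InqForm P) :
    truth M w (fneg φ) ↔ ¬ truth M w φ := by
  simp only [truth, fneg, support]
  constructor
  · intro h ht
    exact Set.singleton_ne_empty w (h {w} (subset_refl _) ht)
  · intro h t hts hφ
    rcases Set.subset_singleton_iff_eq.1 hts with rfl | rfl
    · rfl
    · exact absurd hφ h

lemma support_fdneg (M : InqModel P) (φ : InqForm P) (s : Set M.W) :
    support M (fdneg φ) s ↔ ∀ w ∈ s, truth M w φ := by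
  constructor
  · intro h w hw
    by_contra hnt
    have h1 : support M (fneg φ) {w} := (truth_fneg M w φ).2 hnt
    exact Set.singleton_ne_empty w (h {w} (Set.singleton_subset_iff.2 hw) h1)
  · intro h t hts hneg
    by_contra ht
    obtain ⟨v, hv⟩ := Set.nonempty_iff_ne_empty.2 ht
    have : truth M v φ := h v (hts hv)
    exact Set.singleton_ne_empty v (hneg {v} (Set.singleton_subset_iff.2 hv) this)

lemma truth_and (M : InqModel P) (w : M.W) (φ ψ : InqForm P) :
    truth M w (φ.and ψ) ↔ truth M w φ ∧ truth M w ψ := by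
  simp [truth, support]

lemma truth_boxplus (M : InqModel P) (w : M.W) (φ : InqForm P) :
    truth M w (.boxplus φ) ↔ ∀ t ∈ M.Sig w, support M φ t := by
  simp [truth, support]

def formsOf {α : Type} [Finite α] (S : Set α) (f : α → InqForm P) : List (InqForm P) :=
  (S.toFinite.toFinset.toList).map f

lemma mem_formsOf {α : Type} [Finite α] (S : Set α) (f : α → InqForm P) (ψ : InqForm P) :
    ψ ∈ formsOf S f ↔ ∃ a ∈ S, f a = ψ := by
  simp [formsOf, Set.Finite.mem_toFinset]

lemma mdepth_fneg (φ : InqForm P) : mdepth (fneg φ) = mdepth φ := by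
  simp [fneg, mdepth]

lemma mdepth_fdneg (φ : InqForm P) : mdepth (fdneg φ) = mdepth φ := by
  simp [fdneg, mdepth_fneg]

lemma mdepth_ftop : mdepth (ftop : InqForm P) = 0 := rfl

lemma mdepth_bigConj_le (l : List (InqForm P)) (n : ℕ) (h : ∀ φ ∈ l, mdepth φ ≤ n) :
    mdepth (bigConj l) ≤ n := by
  induction l with
  | nil => simp [bigConj, mdepth_ftop]
  | cons φ l ih =>
    simp only [bigConj, mdepth, max_le_iff]
    exact ⟨h φ (by simp), ih fun ψ hψ => h ψ (by simp [hψ])⟩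

lemma mdepth_bigIdisj_le (l : List (InqForm P)) (n : ℕ) (h : ∀ φ ∈ l, mdepth φ ≤ n) :
    mdepth (bigIdisj l) ≤ n := by
  induction l with
  | nil => simp [bigIdisj, mdepth]
  | cons φ l ih =>
    simp only [bigIdisj, mdepth, max_le_iff]
    exact ⟨h φ (by simp), ih fun ψ hψ => h ψ (by simp [hψ])⟩

def TypeSpace (P : Type) : ℕ → Type
  | 0 => Set P
  | n+1 => Set P × Set (Set (TypeSpace P n))

instance TypeSpace.finite (P : Type) [Finite P] : ∀ n, Finite (TypeSpace P n)
  | 0 => by unfold TypeSpace; infer_instance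
  | n+1 => by
    have := TypeSpace.finite P n
    unfold TypeSpace
    infer_instance

def ty (M : InqModel P) : (n : ℕ) → M.W → TypeSpace P n
  | 0, w => {p | w ∈ M.V p}
  | n+1, w => ⟨{p | w ∈ M.V p}, {T | ∃ s ∈ M.Sig w, ty M n '' s = T}⟩

lemma stateRel_iff_image {M M' : InqModel P} {n : ℕ}
    (IH : ∀ (v : M.W) (v' : M'.W), NBisimW M M' n v v' ↔ ty M n v = ty M' n v')
    (s : Set M.W) (s' : Set M'.W) :
    StateRel (NBisimW M M' n) s s' ↔ ty M n '' s = ty M' n '' s' := by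
  constructor
  · rintro ⟨h1, h2⟩
    apply Set.Subset.antisymm
    · rintro x ⟨v, hv, rfl⟩
      obtain ⟨v', hv', hb⟩ := h1 v hv
      exact ⟨v', hv', ((IH v v').1 hb).symm⟩
    · rintro x ⟨v', hv', rfl⟩
      obtain ⟨v, hv, hb⟩ := h2 v' hv'
      exact ⟨v, hv, (IH v v').1 hb⟩
  · intro h
    constructor
    · intro v hv
      have : ty M n v ∈ ty M' n '' s' := h ▸ Set.mem_image_of_mem _ hv
      obtain ⟨v', hv', he⟩ := this
      exact ⟨v', hv', (IH v v').2 he.symm⟩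
    · intro v' hv'
      have : ty M' n v' ∈ ty M n '' s := h ▸ Set.mem_image_of_mem _ hv'
      obtain ⟨v, hv, he⟩ := this
      exact ⟨v, hv, (IH v v').2 he⟩

lemma nbisim_iff_ty (M M' : InqModel P) :
    ∀ (n : ℕ) (w : M.W) (w' : M'.W), NBisimW M M' n w w' ↔ ty M n w = ty M' n w' := by
  intro n
  induction n with
  | zero =>
    intro w w'
    show (∀ p : P, w ∈ M.V p ↔ w' ∈ M'.V p) ↔ _
    constructor
    · intro h
      show ({p | w ∈ M.V p} : Set P) = {p | w' ∈ M'.V p}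
      ext p; exact h p
    · intro h p
      have h' : ({p | w ∈ M.V p} : Set P) = {p | w' ∈ M'.V p} := h
      simpa using Set.ext_iff.1 h' p
  | succ n IH =>
    intro w w'
    show (_ ∧ _ ∧ _) ↔ _
    have hpair : ty M (n+1) w = ty M' (n+1) w' ↔
        (({p | w ∈ M.V p} : Set P) = {p | w' ∈ M'.V p} ∧
          ({T | ∃ s ∈ M.Sig w, ty M n '' s = T} : Set (Set (TypeSpace P n))) =
            {T | ∃ s' ∈ M'.Sig w', ty M' n '' s' = T}) := by
      show (Prod.mk _ _ : Set P × Set (Set (TypeSpace P n))) = Prod.mk _ _ ↔ _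
      rw [Prod.mk.injEq]
    rw [hpair]
    constructor
    · rintro ⟨ha, hforth, hback⟩
      refine ⟨by rw [Set.ext_iff]; simpa using ha, ?_⟩
      apply Set.Subset.antisymm
      · rintro T ⟨s, hs, rfl⟩
        obtain ⟨s', hs', hrel⟩ := hforth s hs
        exact ⟨s', hs', ((stateRel_iff_image IH s s').1 hrel).symm⟩
      · rintro T ⟨s', hs', rfl⟩
        obtain ⟨s, hs, hrel⟩ := hback s' hs'
        exact ⟨s, hs, (stateRel_iff_image IH s s').1 hrel⟩
    · rintro ⟨ha, hS⟩
      refine ⟨by rw [Set.ext_iff] at ha; simpa using ha, ?_, ?_⟩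
      · intro s hs
        have : ty M n '' s ∈ {T | ∃ s' ∈ M'.Sig w', ty M' n '' s' = T} := hS ▸ ⟨s, hs, rfl⟩
        obtain ⟨s', hs', he⟩ := this
        exact ⟨s', hs', (stateRel_iff_image IH s s').2 he.symm⟩
      · intro s' hs'
        have : ty M' n '' s' ∈ {T | ∃ s ∈ M.Sig w, ty M n '' s = T} := hS ▸ ⟨s', hs', rfl⟩
        obtain ⟨s, hs, he⟩ := this
        exact ⟨s, hs, (stateRel_iff_image IH s s').2 he⟩

variable [Finite P]

def atomsFor (A : Set P) : InqForm P :=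
  bigConj (formsOf A (fun p => .atom p) ++ formsOf Aᶜ (fun p => fneg (.atom p)))

lemma truth_atomsFor (M : InqModel P) (w : M.W) (A : Set P) :
    truth M w (atomsFor A) ↔ ({p | w ∈ M.V p} : Set P) = A := by
  unfold atomsFor
  rw [show truth M w (bigConj _) = support M (bigConj _) {w} from rfl, support_bigConj]
  constructor
  · intro h
    ext p
    simp only [Set.mem_setOf_eq]
    constructor
    · intro hw
      by_contra hp
      have hmem : fneg (.atom p) ∈ formsOf Aᶜ (fun p => fneg (InqForm.atom p)) :=
        (mem_formsOf _ _ _).2 ⟨p, hp, rfl⟩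
      have := h _ (List.mem_append_right _ hmem)
      exact (truth_fneg M w (.atom p)).1 this (Set.singleton_subset_iff.2 hw)
    · intro hp
      have hmem : (InqForm.atom p) ∈ formsOf A (fun p => (InqForm.atom p)) :=
        (mem_formsOf _ _ _).2 ⟨p, hp, rfl⟩
      exact Set.singleton_subset_iff.1 (h _ (List.mem_append_left _ hmem))
  · intro h φ hφ
    rcases List.mem_append.1 hφ with hφ | hφ
    · obtain ⟨p, hp, rfl⟩ := (mem_formsOf _ _ _).1 hφ
      have : w ∈ M.V p := by rw [← h] at hp; exact hp
      exact Set.singleton_subset_iff.2 this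
    · obtain ⟨p, hp, rfl⟩ := (mem_formsOf _ _ _).1 hφ
      refine (truth_fneg M w (.atom p)).2 ?_
      intro ht
      have : w ∈ M.V p := Set.singleton_subset_iff.1 ht
      rw [← h] at hp
      exact hp this

def phiFor : (n : ℕ) → TypeSpace P n → InqForm P
  | 0, A => atomsFor A
  | n+1, t =>
      (atomsFor t.1).and
        ((InqForm.boxplus (bigIdisj (formsOf t.2
            (fun T => fdneg (bigIdisj (formsOf T (phiFor n))))))).and
          (bigConj (formsOf t.2 (fun T =>
            if T = ∅ then ftop
            else fneg (InqForm.boxplus (bigIdisj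
              (formsOf T (fun u => fdneg (fneg (phiFor n u))))))))))

lemma mdepth_atomsFor (A : Set P) : mdepth (atomsFor A) ≤ 0 := by
  apply mdepth_bigConj_le
  intro φ hφ
  rcases List.mem_append.1 hφ with hφ | hφ
  · obtain ⟨p, _, rfl⟩ := (mem_formsOf _ _ _).1 hφ
    simp [mdepth]
  · obtain ⟨p, _, rfl⟩ := (mem_formsOf _ _ _).1 hφ
    simp [mdepth_fneg, mdepth]

lemma mdepth_phiFor : ∀ (n : ℕ) (t : TypeSpace P n), mdepth (phiFor n t) ≤ n := by
  intro n
  induction n with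
  | zero => intro t; exact mdepth_atomsFor t
  | succ n IH =>
    intro t
    simp only [phiFor, mdepth, max_le_iff]
    refine ⟨le_trans (mdepth_atomsFor t.1) (Nat.zero_le _), ?_, ?_⟩
    · have : mdepth (bigIdisj (formsOf t.2
          (fun T => fdneg (bigIdisj (formsOf T (phiFor n)))))) ≤ n := by
        apply mdepth_bigIdisj_le
        intro φ hφ
        obtain ⟨T, _, rfl⟩ := (mem_formsOf _ _ _).1 hφ
        rw [mdepth_fdneg]
        apply mdepth_bigIdisj_le
        intro ψ hψ
        obtain ⟨u, _, rfl⟩ := (mem_formsOf _ _ _).1 hψ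
        exact IH u
      omega
    · apply mdepth_bigConj_le
      intro φ hφ
      obtain ⟨T, _, rfl⟩ := (mem_formsOf _ _ _).1 hφ
      by_cases hT : T = ∅
      · simp [hT, mdepth_ftop]
      · rw [if_neg hT, mdepth_fneg]
        have : mdepth (bigIdisj (formsOf T (fun u => fdneg (fneg (phiFor n u))))) ≤ n := by
          apply mdepth_bigIdisj_le
          intro ψ hψ
          obtain ⟨u, _, rfl⟩ := (mem_formsOf _ _ _).1 hψ
          rw [mdepth_fdneg, mdepth_fneg]
          exact IH u
        calc mdepth (InqForm.boxplus _) = _ + 1 := rfl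
          _ ≤ n + 1 := by omega

omit [Finite P] in
lemma image_down (M : InqModel P) (n : ℕ) (w : M.W) (s : Set M.W) (hs : s ∈ M.Sig w)
    (T : Set (TypeSpace P n)) (hT : T ⊆ ty M n '' s) :
    ∃ s₀ ∈ M.Sig w, ty M n '' s₀ = T := by
  refine ⟨{v | v ∈ s ∧ ty M n v ∈ T}, M.Sig_downward w s hs _ (fun v hv => hv.1), ?_⟩
  apply Set.Subset.antisymm
  · rintro x ⟨v, ⟨_, hvT⟩, rfl⟩
    exact hvT
  · intro u hu
    obtain ⟨v, hv, rfl⟩ := hT hu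
    exact ⟨v, ⟨hv, hu⟩, rfl⟩

omit [Finite P] in
lemma empty_mem_Sig (M : InqModel P) (w : M.W) : ∅ ∈ M.Sig w := by
  obtain ⟨s, hs⟩ := M.Sig_nonempty w
  exact M.Sig_downward w s hs ∅ (Set.empty_subset s)

lemma phi_spec : ∀ (n : ℕ) (M : InqModel P) (w : M.W) (M' : InqModel P) (w' : M'.W),
    truth M' w' (phiFor n (ty M n w)) ↔ ty M' n w' = ty M n w := by
  intro n
  induction n with
  | zero =>
    intro M w M' w'
    exact truth_atomsFor M' w' {p | w ∈ M.V p}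
  | succ n IH =>
    intro M w M' w'
    -- the two components of the target type
    set A : Set P := {p | w ∈ M.V p} with hA
    set S : Set (Set (TypeSpace P n)) := {T | ∃ s ∈ M.Sig w, ty M n '' s = T} with hS
    have hty : ty M (n+1) w = (⟨A, S⟩ : Set P × Set (Set (TypeSpace P n))) := rfl
    -- support lemma for the "subsumption" formulas
    have hSub : ∀ T ∈ S, ∀ (s' : Set M'.W),
        support M' (fdneg (bigIdisj (formsOf T (phiFor n)))) s' ↔
          ∀ v ∈ s', ty M' n v ∈ T := by
      rintro T ⟨s, hs, rfl⟩ s'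
      rw [support_fdneg]
      refine forall₂_congr fun v _ => ?_
      rw [show truth M' v (bigIdisj _) = support M' (bigIdisj _) {v} from rfl,
        support_bigIdisj]
      constructor
      · rintro (h0 | ⟨ψ, hψ, hsup⟩)
        · exact absurd h0 (Set.singleton_ne_empty v)
        · obtain ⟨u, hu, rfl⟩ := (mem_formsOf _ _ _).1 hψ
          obtain ⟨v₀, hv₀, rfl⟩ := hu
          have := (IH M v₀ M' v).1 hsup
          exact this ▸ Set.mem_image_of_mem _ hv₀
      · rintro ⟨v₀, hv₀, he⟩
        exact Or.inr ⟨phiFor n (ty M n v₀),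
          (mem_formsOf _ _ _).2 ⟨ty M n v₀, Set.mem_image_of_mem _ hv₀, rfl⟩,
          (IH M v₀ M' v).2 he.symm⟩
    -- support lemma for the "avoid" formulas
    have hAvoid : ∀ (u : TypeSpace P n), (∃ v₀ : M.W, ty M n v₀ = u) →
        ∀ (s' : Set M'.W),
        support M' (fdneg (fneg (phiFor n u))) s' ↔ ∀ v ∈ s', ty M' n v ≠ u := by
      rintro u ⟨v₀, rfl⟩ s'
      rw [support_fdneg]
      refine forall₂_congr fun v _ => ?_
      rw [truth_fneg]
      exact not_congr (IH M v₀ M' v)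
    -- truth of the existence formulas
    have hE : ∀ T ∈ S, (truth M' w' (if T = ∅ then ftop
          else fneg (InqForm.boxplus (bigIdisj
            (formsOf T (fun u => fdneg (fneg (phiFor n u)))))))
        ↔ ∃ s' ∈ M'.Sig w', T ⊆ ty M' n '' s') := by
      intro T hT
      have hreal : ∀ u ∈ T, ∃ v₀ : M.W, ty M n v₀ = u := by
        obtain ⟨s, hs, rfl⟩ := hT
        rintro u ⟨v₀, _, rfl⟩
        exact ⟨v₀, rfl⟩
      by_cases h0 : T = ∅
      · rw [if_pos h0, h0]
        simp only [Set.empty_subset, and_true]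
        constructor
        · intro _
          obtain ⟨s, hs⟩ := M'.Sig_nonempty w'
          exact ⟨s, hs⟩
        · intro _
          exact support_ftop M' {w'}
      · rw [if_neg h0, truth_fneg, truth_boxplus]
        have hsupp : ∀ (s' : Set M'.W),
            support M' (bigIdisj (formsOf T (fun u => fdneg (fneg (phiFor n u))))) s' ↔
              ¬ (T ⊆ ty M' n '' s') := by
          intro s'
          rw [support_bigIdisj]
          constructor
          · rintro (h1 | ⟨ψ, hψ, hsup⟩) hsub
            · obtain ⟨u, hu⟩ := Set.nonempty_iff_ne_empty.2 h0
              obtain ⟨v, hv, _⟩ := hsub hu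
              subst h1
              exact hv
            · obtain ⟨u, hu, rfl⟩ := (mem_formsOf _ _ _).1 hψ
              have := (hAvoid u (hreal u hu) s').1 hsup
              obtain ⟨v, hv, he⟩ := hsub hu
              exact this v hv he
          · intro hnsub
            right
            rw [Set.not_subset] at hnsub
            obtain ⟨u, hu, hnotim⟩ := hnsub
            refine ⟨fdneg (fneg (phiFor n u)), (mem_formsOf _ _ _).2 ⟨u, hu, rfl⟩, ?_⟩
            rw [hAvoid u (hreal u hu) s']
            intro v hv he
            exact hnotim (he ▸ Set.mem_image_of_mem _ hv)
        constructor
        · intro h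
          push_neg at h
          obtain ⟨s', hs', hn⟩ := h
          rw [hsupp s'] at hn
          exact ⟨s', hs', not_not.1 hn⟩
        · rintro ⟨s', hs', hsub⟩ h
          exact (hsupp s').1 (h s' hs') hsub
    -- unfold the formula
    rw [hty]
    show truth M' w' ((atomsFor A).and _) ↔ _
    rw [truth_and, truth_and, truth_atomsFor, truth_boxplus]
    -- the second conjunct
    have hc2 : (∀ t ∈ M'.Sig w', support M' (bigIdisj (formsOf S
          (fun T => fdneg (bigIdisj (formsOf T (phiFor n)))))) t) ↔
        (∀ s' ∈ M'.Sig w', ∃ T ∈ S, ∀ v ∈ s', ty M' n v ∈ T) := by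
      refine forall₂_congr fun s' _ => ?_
      rw [support_bigIdisj]
      constructor
      · rintro (h1 | ⟨ψ, hψ, hsup⟩)
        · subst h1
          refine ⟨∅, ⟨∅, empty_mem_Sig M w, by simp⟩, by simp⟩
        · obtain ⟨T, hTS, rfl⟩ := (mem_formsOf _ _ _).1 hψ
          exact ⟨T, hTS, (hSub T hTS s').1 hsup⟩
      · rintro ⟨T, hTS, h⟩
        exact Or.inr ⟨_, (mem_formsOf _ _ _).2 ⟨T, hTS, rfl⟩, (hSub T hTS s').2 h⟩
    rw [hc2]
    -- the third conjunct
    have hc3 : truth M' w' (bigConj (formsOf S (fun T =>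
          if T = ∅ then ftop
          else fneg (InqForm.boxplus (bigIdisj
            (formsOf T (fun u => fdneg (fneg (phiFor n u))))))))) ↔
        (∀ T ∈ S, ∃ s' ∈ M'.Sig w', T ⊆ ty M' n '' s') := by
      rw [show truth M' w' (bigConj _) = support M' (bigConj _) {w'} from rfl,
        support_bigConj]
      constructor
      · intro h T hTS
        exact (hE T hTS).1 (h _ ((mem_formsOf _ _ _).2 ⟨T, hTS, rfl⟩))
      · intro h ψ hψ
        obtain ⟨T, hTS, rfl⟩ := (mem_formsOf _ _ _).1 hψ
        exact (hE T hTS).2 (h T hTS)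
    rw [hc3]
    -- now a purely set-theoretic equivalence
    have hty' : ty M' (n+1) w' = (⟨{p | w' ∈ M'.V p},
        {T | ∃ s' ∈ M'.Sig w', ty M' n '' s' = T}⟩ : Set P × Set (Set (TypeSpace P n))) := rfl
    rw [hty']
    erw [show ((⟨{p | w' ∈ M'.V p}, {T | ∃ s' ∈ M'.Sig w', ty M' n '' s' = T}⟩ :
          Set P × Set (Set (TypeSpace P n))) = ⟨A, S⟩) ↔
        (({p | w' ∈ M'.V p} : Set P) = A ∧
          ({T | ∃ s' ∈ M'.Sig w', ty M' n '' s' = T} : Set (Set (TypeSpace P n))) = S)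
      from Prod.mk.injEq _ _ _ _ ▸ Iff.rfl]
    constructor
    · rintro ⟨ha, h1, h2⟩
      refine ⟨ha, Set.Subset.antisymm ?_ ?_⟩
      · rintro T ⟨s', hs', rfl⟩
        obtain ⟨T', hT'S, hsub⟩ := h1 s' hs'
        obtain ⟨s, hs, rfl⟩ := hT'S
        have hsub' : ty M' n '' s' ⊆ ty M n '' s := by
          rintro x ⟨v, hv, rfl⟩
          exact hsub v hv
        exact image_down M n w s hs _ hsub'
      · intro T hTS
        obtain ⟨s', hs', hsub⟩ := h2 T hTS
        exact image_down M' n w' s' hs' T hsub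
    · rintro ⟨ha, hSS⟩
      refine ⟨ha, ?_, ?_⟩
      · intro s' hs'
        have : ty M' n '' s' ∈ S := hSS ▸ ⟨s', hs', rfl⟩
        exact ⟨ty M' n '' s', this, fun v hv => Set.mem_image_of_mem _ hv⟩
      · intro T hTS
        have : T ∈ {T | ∃ s' ∈ M'.Sig w', ty M' n '' s' = T} := hSS ▸ hTS
        obtain ⟨s', hs', rfl⟩ := this
        exact ⟨s', hs', subset_refl _⟩

end CharAux

end

end Aux

/-- **Characteristic formulae for worlds**: over a finite set of atomic
propositions, every `~^n`-class of world-pointed models is defined by a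
formula of modal depth at most `n`. -/
theorem characteristic_formula_world {P : Type} [Finite P]
    (M : InqModel P) (w : M.W) (n : ℕ) :
    ∃ χ : InqForm P, mdepth χ ≤ n ∧
      ∀ (M' : InqModel P) (w' : M'.W), truth M' w' χ ↔ NBisimW M' M n w' w := by
  refine ⟨CharAux.phiFor n (CharAux.ty M n w), CharAux.mdepth_phiFor n _, ?_⟩
  intro M' w'
  rw [CharAux.phi_spec n M w M' w']
  exact (CharAux.nbisim_iff_ty M' M n w' w).symm
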